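/- In the m-player game, for every 1 ≤ i ≤ m and every s ∈ [−1,1], Q_τ(s) · P(A_i) · s^{l_i} = Σ_{j=1}^{m} g_τ^{A_j}(s) · w_{A_i}^{A_j}(s), where Q_τ(s) = Σ_{n≥0} μ(τ > n) s^n and g_τ^{A_j}(s) = Σ_{n≥0} p_n^{A_j} s^n. -/

import Mathlib

open MeasureTheory ENNReal

noncomputable section

/-- Probability of a single toss outcome: `true` (heads) has probability `p`,
`false` (tails) has probability `1 - p`. -/
def letterP (p : ℝ) (b : Bool) : ℝ := if b then p else 1 - p

/-- Probability of a finite string of tosses (`1` for the empty string). -/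
def strP (p : ℝ) (A : List Bool) : ℝ := (A.map (letterP p)).prod

/-- `μ` is the product measure on `{H,T}^ℕ` of i.i.d. coin tosses with heads
probability `p`: every cylinder set has the product probability. -/
def IsCoinMeasure (p : ℝ) (μ : Measure (ℕ → Bool)) : Prop :=
  ∀ (n : ℕ) (a : Fin n → Bool),
    μ {ξ | ∀ i : Fin n, ξ i = a i} = ENNReal.ofReal (∏ i, letterP p (a i))

/-- The pattern `A` (of length `l`) occurs ending exactly at toss `n`
(toss number `k ≥ 1` of `ξ` is `ξ (k - 1)`): `n ≥ l` and tosses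
`n - l + 1, …, n` spell `A`. -/
def occursAt (A : List Bool) (ξ : ℕ → Bool) (n : ℕ) : Prop :=
  A.length ≤ n ∧ (List.ofFn fun k : Fin A.length => ξ (n - A.length + k)) = A

/-- The first toss at which the pattern `A` has occurred (`⊤` if it never occurs). -/
def hitTime (A : List Bool) (ξ : ℕ → Bool) : ℕ∞ :=
  ⨅ (n : ℕ) (_ : occursAt A ξ n), (n : ℕ∞)

/-- The number of tosses until the `m`-player game ends: the minimum of the
hitting times of the patterns `A i`. -/
def gameTime {m : ℕ} (A : Fin m → List Bool) (ξ : ℕ → Bool) : ℕ∞ :=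
  ⨅ i, hitTime (A i) ξ

/-- The correlation polynomial
`w_A^B(s) = Σ_{k=1}^{min(|A|,|B|)} [A_(k) = B^(k)] P(A^(|A|-k)) s^(|A|-k)`,
where `A_(k)` is the prefix of length `k` of `A` and `B^(k)` is the suffix of
length `k` of `B`. -/
def corrW (p : ℝ) (A B : List Bool) (s : ℝ) : ℝ :=
  ∑ k ∈ Finset.Icc 1 (min A.length B.length),
    (if A.take k = B.drop (B.length - k) then (1 : ℝ) else 0) *
      strP p (A.drop k) * s ^ (A.length - k)

-- === auxiliary ===

lemma ofFn_eq_iff {f : Fin (A : List Bool).length → Bool} :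
    List.ofFn f = A ↔ ∀ k (hk : k < A.length), f ⟨k, hk⟩ = A[k] := by
  constructor
  · intro h k hk
    have h2 := List.getElem_ofFn (f := f) (i := k) (by simpa using hk)
    simp only [h] at h2; exact h2.symm
  · intro h
    apply List.ext_getElem (by simp)
    intro k h1 h2
    rw [List.getElem_ofFn]; exact h k h2

lemma occursAt_iff {A : List Bool} {ξ n} :
    occursAt A ξ n ↔ A.length ≤ n ∧ ∀ k (hk : k < A.length), ξ (n - A.length + k) = A[k] := by
  unfold occursAt; rw [ofFn_eq_iff]

lemma occursAt_congr {A : List Bool} {ξ η : ℕ → Bool} {n m : ℕ}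
    (h : ∀ k < m, ξ k = η k) (hnm : n ≤ m) : occursAt A ξ n ↔ occursAt A η n := by
  rw [occursAt_iff, occursAt_iff]
  constructor <;> rintro ⟨h1, h2⟩ <;> refine ⟨h1, fun k hk => ?_⟩
  · rw [← h2 k hk]; exact (h _ (by omega)).symm
  · rw [← h2 k hk]; exact h _ (by omega)

lemma hitTime_le {A : List Bool} {ξ n} (h : occursAt A ξ n) : hitTime A ξ ≤ n :=
  iInf₂_le n h

lemma le_hitTime_iff {A : List Bool} {ξ} {n : ℕ} :
    (n : ℕ∞) ≤ hitTime A ξ ↔ ∀ m < n, ¬ occursAt A ξ m := by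
  constructor
  · intro h m hm hocc
    exact absurd (le_trans h (hitTime_le hocc)) (by exact_mod_cast Nat.not_le.2 hm)
  · intro h
    refine le_iInf fun m => le_iInf fun hocc => ?_
    by_contra hc
    have : m < n := by exact_mod_cast not_le.1 hc
    exact h m this hocc

lemma lt_hitTime_iff {A : List Bool} {ξ} {n : ℕ} :
    (n : ℕ∞) < hitTime A ξ ↔ ∀ m ≤ n, ¬ occursAt A ξ m := by
  rw [← ENat.add_one_le_iff (by simp), show ((n:ℕ∞)+1 : ℕ∞) = ((n+1 : ℕ) : ℕ∞) by push_cast; ring,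
    le_hitTime_iff]
  constructor <;> intro h m hm <;> exact h m (by omega)

lemma hitTime_eq_iff {A : List Bool} {ξ} {n : ℕ} :
    hitTime A ξ = n ↔ occursAt A ξ n ∧ ∀ m < n, ¬ occursAt A ξ m := by
  constructor
  · intro h
    have h2 : ∀ m < n, ¬ occursAt A ξ m := le_hitTime_iff.1 h.ge
    refine ⟨?_, h2⟩
    by_contra hc
    have : (n : ℕ∞) < hitTime A ξ := lt_hitTime_iff.2 (fun m hm => by
      rcases eq_or_lt_of_le hm with rfl | hlt
      · exact hc
      · exact h2 m hlt)
    exact absurd h (ne_of_gt this)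
  · rintro ⟨h1, h2⟩
    exact le_antisymm (hitTime_le h1) (le_hitTime_iff.2 h2)

lemma lt_gameTime_iff {m : ℕ} {A : Fin m → List Bool} {ξ} {n : ℕ} :
    (n : ℕ∞) < gameTime A ξ ↔ ∀ j, ∀ k ≤ n, ¬ occursAt (A j) ξ k := by
  unfold gameTime
  rw [← ENat.add_one_le_iff (by simp : (n:ℕ∞) ≠ ⊤), le_iInf_iff]
  constructor
  · intro h j
    have := h j
    rw [ENat.add_one_le_iff (by simp : (n:ℕ∞) ≠ ⊤)] at this
    exact lt_hitTime_iff.1 this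
  · intro h j
    exact ENat.add_one_le_iff (by simp) |>.2 (lt_hitTime_iff.2 (h j))

lemma gameTime_hit_iff {m : ℕ} {A : Fin m → List Bool} {ξ} {j : Fin m} {n : ℕ} :
    (gameTime A ξ = n ∧ hitTime (A j) ξ = n) ↔
    occursAt (A j) ξ n ∧ ∀ j', ∀ k < n, ¬ occursAt (A j') ξ k := by
  constructor
  · rintro ⟨hg, hj⟩
    refine ⟨(hitTime_eq_iff.1 hj).1, fun j' k hk => ?_⟩
    have : (n : ℕ∞) ≤ hitTime (A j') ξ := hg ▸ iInf_le (fun i => hitTime (A i) ξ) j'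
    exact le_hitTime_iff.1 this k hk
  · rintro ⟨h1, h2⟩
    have hj : hitTime (A j) ξ = n := hitTime_eq_iff.2 ⟨h1, h2 j⟩
    refine ⟨le_antisymm (hj ▸ iInf_le _ j) (le_iInf fun j' => le_hitTime_iff.2 (h2 j')), hj⟩

section Y
variable {p : ℝ} {μ : Measure (ℕ → Bool)}

def Cyl (n : ℕ) (a : Fin n → Bool) : Set (ℕ → Bool) := {ξ | ∀ i : Fin n, ξ i = a i}
def SpellAt (n : ℕ) (B : List Bool) : Set (ℕ → Bool) :=
  {ξ | ∀ k (hk : k < B.length), ξ (n + k) = B[k]}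
def DetBy (n : ℕ) (S : Set (ℕ → Bool)) : Prop :=
  ∀ ξ η : ℕ → Bool, (∀ k < n, ξ k = η k) → (ξ ∈ S ↔ η ∈ S)

lemma measurableSet_cyl {n a} : MeasurableSet (Cyl n a) := by
  have : Cyl n a = ⋂ i : Fin n, (fun ξ : ℕ → Bool => ξ (i:ℕ)) ⁻¹' {a i} := by
    ext ξ; simp [Cyl]
  rw [this]
  exact MeasurableSet.iInter fun i => (measurable_pi_apply _) (measurableSet_singleton _)

lemma cyl_disjoint {n} {a b : Fin n → Bool} (h : a ≠ b) : Disjoint (Cyl n a) (Cyl n b) := by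
  rw [Set.disjoint_left]
  intro ξ ha hb
  exact h (funext fun i => (ha i).symm.trans (hb i))

open Classical in
/-- The canonical finite decomposition of a set determined by the first n coordinates. -/
lemma detBy_eq_biUnion {n S} (hS : DetBy n S) :
    S = ⋃ a ∈ Finset.univ.filter
      (fun a : Fin n → Bool => (fun k => if h : k < n then a ⟨k, h⟩ else false) ∈ S),
      Cyl n a := by
  ext ξ
  simp only [Set.mem_iUnion, Finset.mem_filter, Finset.mem_univ, true_and, exists_prop]
  constructor
  · intro hξ
    refine ⟨fun i => ξ i, ?_, fun i => rfl⟩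
    rw [← hS ξ _ (fun k hk => by simp [hk])] ; exact hξ
  · rintro ⟨a, ha, hξ⟩
    rw [hS ξ _ (fun k hk => by
      show ξ k = if h : k < n then a ⟨k, h⟩ else false
      rw [dif_pos hk]; exact hξ ⟨k, hk⟩)]
    exact ha

lemma detBy_measurable {n S} (hS : DetBy n S) : MeasurableSet S := by
  rw [detBy_eq_biUnion hS]
  exact (Finset.measurableSet_biUnion _ fun a _ => measurableSet_cyl)

lemma strP_nonneg (hp0 : 0 < p) (hp1 : p < 1) (A : List Bool) : 0 ≤ strP p A := by
  apply List.prod_nonneg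
  intro x hx
  simp only [List.mem_map] at hx
  obtain ⟨b, _, rfl⟩ := hx
  cases b <;> simp [letterP] <;> linarith

lemma strP_le_one (hp0 : 0 < p) (hp1 : p < 1) (A : List Bool) : strP p A ≤ 1 := by
  induction A with
  | nil => simp [strP]
  | cons b t ih =>
    have ht := strP_nonneg hp0 hp1 t
    have : strP p (b :: t) = letterP p b * strP p t := by simp [strP]
    rw [this]
    have hb0 : 0 ≤ letterP p b := by cases b <;> simp [letterP] <;> linarith
    have hb1 : letterP p b ≤ 1 := by cases b <;> simp [letterP] <;> linarith
    calc letterP p b * strP p t ≤ 1 * 1 := by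
          exact mul_le_mul hb1 ih ht (by linarith)
      _ = 1 := by ring

lemma prod_fin_letter (B : List Bool) :
    (∏ k : Fin B.length, letterP p (B.get k)) = strP p B := by
  calc (∏ k : Fin B.length, letterP p (B.get k))
      = (List.ofFn (letterP p ∘ B.get)).prod := List.prod_ofFn.symm
    _ = ((List.ofFn B.get).map (letterP p)).prod := by rw [List.map_ofFn]
    _ = strP p B := by rw [List.ofFn_get]; rfl

/-- the cylinder-extension by a list -/
def extFn (n : ℕ) (a : Fin n → Bool) (B : List Bool) : Fin (n + B.length) → Bool :=
  fun k => if h : (k : ℕ) < n then a ⟨k, h⟩ else B.get ⟨(k : ℕ) - n, by omega⟩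

lemma cyl_inter_spell {n : ℕ} (a : Fin n → Bool) (B : List Bool) :
    Cyl n a ∩ SpellAt n B = Cyl (n + B.length) (extFn n a B) := by
  ext ξ
  simp only [Cyl, SpellAt, Set.mem_inter_iff, Set.mem_setOf_eq, extFn]
  constructor
  · rintro ⟨h1, h2⟩ k
    by_cases hk : (k : ℕ) < n
    · simp only [hk, dif_pos]; exact h1 ⟨k, hk⟩
    · simp only [hk, dif_neg]
      have hk2 : (k : ℕ) - n < B.length := by omega
      have := h2 ((k : ℕ) - n) hk2
      rw [show n + ((k:ℕ) - n) = (k : ℕ) by omega] at this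
      rw [this]; simp [List.get_eq_getElem]
  · intro h
    constructor
    · intro i
      have := h ⟨(i : ℕ), by omega⟩
      simpa [i.2, dif_pos] using this
    · intro k hk
      have := h ⟨n + k, by omega⟩
      simp only [show ¬ (n + k < n) by omega, dif_neg, not_false_iff] at this
      simpa [show n + k - n = k by omega, List.get_eq_getElem] using this

lemma coin_cyl (hμ : IsCoinMeasure p μ) (n : ℕ) (a : Fin n → Bool) :
    μ (Cyl n a) = ENNReal.ofReal (∏ i, letterP p (a i)) := hμ n a

/-- Key splitting lemma. -/
lemma split_lemma (hμ : IsCoinMeasure p μ) (hp0 : 0 < p) (hp1 : p < 1)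
    {n : ℕ} {S : Set (ℕ → Bool)} (hS : DetBy n S) (B : List Bool) :
    μ (S ∩ SpellAt n B) = μ S * ENNReal.ofReal (strP p B) := by
  classical
  set F := Finset.univ.filter
      (fun a : Fin n → Bool => (fun k => if h : k < n then a ⟨k, h⟩ else false) ∈ S) with hF
  have hdecomp : S = ⋃ a ∈ F, Cyl n a := detBy_eq_biUnion hS
  have hPD : (F : Set (Fin n → Bool)).PairwiseDisjoint (Cyl n) :=
    fun a _ b _ hab => cyl_disjoint hab
  have hμS : μ S = ∑ a ∈ F, μ (Cyl n a) := by
    rw [hdecomp]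
    exact measure_biUnion_finset hPD fun a _ => measurableSet_cyl
  have hinter : S ∩ SpellAt n B = ⋃ a ∈ F, (Cyl n a ∩ SpellAt n B) := by
    rw [hdecomp, Set.iUnion₂_inter]
  have hμSI : μ (S ∩ SpellAt n B) = ∑ a ∈ F, μ (Cyl n a ∩ SpellAt n B) := by
    rw [hinter]
    refine measure_biUnion_finset (fun a ha b hb hab => ?_) (fun a _ => ?_)
    · exact Disjoint.mono Set.inter_subset_left Set.inter_subset_left (cyl_disjoint hab)
    · rw [cyl_inter_spell]; exact measurableSet_cyl
  have hterm : ∀ a : Fin n → Bool,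
      μ (Cyl n a ∩ SpellAt n B) = μ (Cyl n a) * ENNReal.ofReal (strP p B) := by
    intro a
    rw [cyl_inter_spell, coin_cyl hμ, coin_cyl hμ]
    have hsplit : (∏ i : Fin (n + B.length), letterP p (extFn n a B i)) =
        (∏ i : Fin n, letterP p (a i)) * strP p B := by
      rw [Fin.prod_univ_add]
      congr 1
      · apply Finset.prod_congr rfl
        intro i _
        congr 1
        simp only [extFn, Fin.coe_castAdd, Fin.is_lt, dif_pos]
      · rw [← prod_fin_letter]
        apply Finset.prod_congr rfl
        intro i _
        congr 1
        simp only [extFn, Fin.coe_natAdd]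
        rw [dif_neg (by omega)]
        congr 1
        exact Fin.ext (by simp)
    rw [hsplit, ENNReal.ofReal_mul]
    exact Finset.prod_nonneg fun i _ => by
      cases a i <;> simp [letterP] <;> linarith
  rw [hμSI, hμS, Finset.sum_mul]
  exact Finset.sum_congr rfl fun a _ => hterm a


end Y

section Z
variable {p : ℝ} {μ : Measure (ℕ → Bool)}

lemma spellAt_iff_occursAt {n : ℕ} {B : List Bool} {ξ : ℕ → Bool} :
    ξ ∈ SpellAt n B ↔ occursAt B ξ (n + B.length) := by
  rw [occursAt_iff]
  constructor
  · intro h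
    refine ⟨by omega, fun k hk => ?_⟩
    rw [show n + B.length - B.length + k = n + k by omega]
    exact h k hk
  · rintro ⟨-, h⟩ k hk
    have := h k hk
    rwa [show n + B.length - B.length + k = n + k by omega] at this

lemma spellAt_split {n : ℕ} {B : List Bool} {k : ℕ} (hk : k ≤ B.length) :
    SpellAt n B = SpellAt n (B.take k) ∩ SpellAt (n + k) (B.drop k) := by
  ext ξ
  simp only [SpellAt, Set.mem_inter_iff, Set.mem_setOf_eq, List.length_take, List.length_drop]
  constructor
  · intro h
    constructor
    · intro q hq
      rw [List.getElem_take]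
      exact h q (by omega)
    · intro q hq
      rw [List.getElem_drop]
      rw [show n + k + q = n + (k + q) by omega]
      exact h (k + q) (by omega)
  · rintro ⟨h1, h2⟩ q hq
    by_cases hqk : q < k
    · have := h1 q (by omega)
      rwa [List.getElem_take] at this
    · have := h2 (q - k) (by omega)
      rw [List.getElem_drop] at this
      rw [show n + k + (q - k) = n + q by omega] at this
      rw [this]
      congr 1
      omega

/-- two patterns occurring at the same position: shorter is a suffix of longer -/
lemma occursAt_suffix {B C : List Bool} {ξ : ℕ → Bool} {t : ℕ}
    (hB : occursAt B ξ t) (hC : occursAt C ξ t) (hlen : B.length ≤ C.length) :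
    B <:+ C := by
  rw [occursAt_iff] at hB hC
  obtain ⟨hB1, hB2⟩ := hB
  obtain ⟨hC1, hC2⟩ := hC
  have : B = C.drop (C.length - B.length) := by
    apply List.ext_getElem (by simp; omega)
    intro r h1 h2
    rw [List.getElem_drop]
    rw [← hB2 r h1, ← hC2 (C.length - B.length + r) (by omega)]
    congr 1
    omega
  rw [this]
  exact List.drop_suffix _ _

lemma detBy_gt {m : ℕ} {A : Fin m → List Bool} {n : ℕ} :
    DetBy n {ξ : ℕ → Bool | (n : ℕ∞) < gameTime A ξ} := by
  intro ξ η h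
  simp only [Set.mem_setOf_eq, lt_gameTime_iff]
  constructor <;> intro hh j k hk <;>
    [rw [← occursAt_congr h hk]; rw [occursAt_congr h hk]] <;> exact hh j k hk

lemma detBy_event {m : ℕ} {A : Fin m → List Bool} {j : Fin m} {t : ℕ} :
    DetBy t {ξ : ℕ → Bool | gameTime A ξ = (t : ℕ∞) ∧ hitTime (A j) ξ = (t : ℕ∞)} := by
  intro ξ η h
  simp only [Set.mem_setOf_eq, gameTime_hit_iff]
  constructor <;> rintro ⟨h1, h2⟩
  · exact ⟨(occursAt_congr h le_rfl).1 h1,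
      fun j' k hk => fun hc => h2 j' k hk ((occursAt_congr h (by omega)).2 hc)⟩
  · exact ⟨(occursAt_congr h le_rfl).2 h1,
      fun j' k hk => fun hc => h2 j' k hk ((occursAt_congr h (by omega)).1 hc)⟩

end Z

section W
variable {p : ℝ} {μ : Measure (ℕ → Bool)}

lemma detBy_spell {n : ℕ} {B : List Bool} : DetBy (n + B.length) (SpellAt n B) := by
  intro ξ η h
  constructor <;> intro hh k hk <;> [rw [← h (n+k) (by omega)]; rw [h (n+k) (by omega)]] <;>
    exact hh k hk

lemma per_n (hp0 : 0 < p) (hp1 : p < 1) (hμ : IsCoinMeasure p μ) [IsProbabilityMeasure μ]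
    {m : ℕ} (hm : 1 ≤ m) (A : Fin m → List Bool) (hlen : ∀ i, 1 ≤ (A i).length)
    (hsub : ∀ i j, i ≠ j → ¬ (A i) <:+: (A j)) (i : Fin m) (n : ℕ) :
    (μ {ξ | (n : ℕ∞) < gameTime A ξ}).toReal * strP p (A i) =
    ∑ j, ∑ k ∈ Finset.Icc 1 (min (A i).length (A j).length),
      (if (A i).take k = (A j).drop ((A j).length - k) then (1:ℝ) else 0) *
        strP p ((A i).drop k) *
        (μ {ξ | gameTime A ξ = ((n + k : ℕ) : ℕ∞) ∧
          hitTime (A j) ξ = ((n + k : ℕ) : ℕ∞)}).toReal := by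
  classical
  set li := (A i).length with hli
  set G : Set (ℕ → Bool) := {ξ | (n : ℕ∞) < gameTime A ξ} with hG
  set T : Fin m → ℕ → Set (ℕ → Bool) := fun j k =>
    {ξ | gameTime A ξ = ((n + k : ℕ) : ℕ∞) ∧ hitTime (A j) ξ = ((n + k : ℕ) : ℕ∞)} with hT
  set Sp := SpellAt n (A i) with hSp
  -- occursAt extraction from T
  have hTocc : ∀ (j : Fin m) (k : ℕ) (ξ : ℕ → Bool), ξ ∈ T j k →
      occursAt (A j) ξ (n + k) := by
    intro j k ξ hξ
    exact (hitTime_eq_iff.1 hξ.2).1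
  -- Step B : covering
  have hcover : G ∩ Sp = ⋃ jk ∈ (Finset.univ ×ˢ Finset.Icc 1 li : Finset (Fin m × ℕ)),
      (T jk.1 jk.2 ∩ Sp) := by
    ext ξ
    simp only [Set.mem_inter_iff, Set.mem_iUnion, Finset.mem_product, Finset.mem_univ,
      Finset.mem_Icc, true_and, exists_prop]
    constructor
    · rintro ⟨hg, hsp⟩
      have hocc : occursAt (A i) ξ (n + li) := spellAt_iff_occursAt.1 hsp
      have hgle : gameTime A ξ ≤ ((n + li : ℕ) : ℕ∞) :=
        le_trans (iInf_le _ i) (hitTime_le hocc)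
      have : Nonempty (Fin m) := ⟨⟨0, hm⟩⟩
      obtain ⟨j0, hj0⟩ := Finite.exists_min (fun j => hitTime (A j) ξ)
      have hgj : gameTime A ξ = hitTime (A j0) ξ :=
        le_antisymm (iInf_le _ j0) (le_iInf hj0)
      have hne : gameTime A ξ ≠ ⊤ :=
        fun hc => ENat.coe_ne_top (n + li) (top_le_iff.1 (hc ▸ hgle))
      set t := (gameTime A ξ).toNat with htdef
      have ht : (t : ℕ∞) = gameTime A ξ := ENat.coe_toNat hne
      have hg' : (n : ℕ∞) < gameTime A ξ := hg
      rw [← ht] at hg' hgle hgj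
      have htn : n < t := by exact_mod_cast hg'
      have htl : t ≤ n + li := by exact_mod_cast hgle
      refine ⟨(j0, t - n), ⟨by omega, by omega⟩, ⟨?_, ?_⟩, hsp⟩
      · rw [show n + (t - n) = t by omega]; exact ht.symm
      · rw [show n + (t - n) = t by omega]; exact hgj.symm
    · rintro ⟨⟨j, k⟩, ⟨hk1, hk2⟩, hT', hsp⟩
      refine ⟨?_, hsp⟩
      show (n : ℕ∞) < gameTime A ξ
      rw [hT'.1]
      exact_mod_cast Nat.lt_add_of_pos_right hk1
  -- Step C : disjointness
  have hdisj : (↑(Finset.univ ×ˢ Finset.Icc 1 li : Finset (Fin m × ℕ)) :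
      Set (Fin m × ℕ)).PairwiseDisjoint (fun jk => T jk.1 jk.2 ∩ Sp) := by
    rintro ⟨j, k⟩ - ⟨j', k'⟩ - hne
    rw [Function.onFun, Set.disjoint_left]
    rintro ξ ⟨hT1, -⟩ ⟨hT2, -⟩
    have hkk : k = k' := by
      have h2 := hT1.1.symm.trans hT2.1
      have : n + k = n + k' := by exact_mod_cast h2
      omega
    subst hkk
    have hjj : j ≠ j' := fun hc => hne (by rw [hc])
    have ho1 : occursAt (A j) ξ (n + k) := (hitTime_eq_iff.1 hT1.2).1
    have ho2 : occursAt (A j') ξ (n + k) := (hitTime_eq_iff.1 hT2.2).1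
    rcases le_total (A j).length (A j').length with hl | hl
    · exact hsub j j' hjj (occursAt_suffix ho1 ho2 hl).isInfix
    · exact hsub j' j hjj.symm (occursAt_suffix ho2 ho1 hl).isInfix
  have hli2 : (A i).length = li := rfl
  -- measurability
  have hdetT : ∀ (j : Fin m) (k : ℕ), DetBy (n + k) (T j k) := by
    intro j k
    simp only [hT]
    exact detBy_event
  have hmeasT : ∀ (j : Fin m) (k : ℕ), MeasurableSet (T j k) := fun j k =>
    detBy_measurable (hdetT j k)
  have hmeasSp : MeasurableSet Sp := detBy_measurable (detBy_spell (n := n) (B := A i))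
  -- Step D : additivity
  have hD : μ (G ∩ Sp) = ∑ jk ∈ (Finset.univ ×ˢ Finset.Icc 1 li : Finset (Fin m × ℕ)),
      μ (T jk.1 jk.2 ∩ Sp) := by
    rw [hcover]
    exact measure_biUnion_finset hdisj fun jk _ => (hmeasT _ _).inter hmeasSp
  -- Step A
  have hA : μ (G ∩ Sp) = μ G * ENNReal.ofReal (strP p (A i)) :=
    split_lemma hμ hp0 hp1 detBy_gt (A i)
  -- empty case 1 : k > |A j|
  have hempty1 : ∀ (j : Fin m) (k : ℕ), 1 ≤ k → k ≤ li → (A j).length < k →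
      T j k ∩ Sp = ∅ := by
    intro j k hk1 hk2 hkj
    rw [Set.eq_empty_iff_forall_notMem]
    rintro ξ ⟨hT', hsp'⟩
    have hsp : ∀ q (hq : q < (A i).length), ξ (n + q) = (A i)[q] := hsp'
    obtain ⟨hocc1, hocc2⟩ := occursAt_iff.1 (hTocc j k ξ hT')
    have hijne : j ≠ i := by
      intro hc; subst hc; omega
    apply hsub j i hijne
    have heq : A j = ((A i).drop (k - (A j).length)).take (A j).length := by
      apply List.ext_getElem (by simp; omega)
      intro r h1 h2
      rw [List.getElem_take, List.getElem_drop]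
      rw [← hocc2 r h1, ← hsp (k - (A j).length + r) (by omega)]
      congr 1
      omega
    rw [heq]
    exact ((List.take_prefix _ _).isInfix).trans ((List.drop_suffix _ _).isInfix)
  -- empty case 2 : mismatch
  have hempty2 : ∀ (j : Fin m) (k : ℕ), 1 ≤ k → k ≤ li → k ≤ (A j).length →
      (A i).take k ≠ (A j).drop ((A j).length - k) → T j k ∩ Sp = ∅ := by
    intro j k hk1 hk2 hkj hne
    rw [Set.eq_empty_iff_forall_notMem]
    rintro ξ ⟨hT', hsp'⟩
    have hsp : ∀ q (hq : q < (A i).length), ξ (n + q) = (A i)[q] := hsp'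
    obtain ⟨hocc1, hocc2⟩ := occursAt_iff.1 (hTocc j k ξ hT')
    apply hne
    apply List.ext_getElem (by simp; omega)
    intro q h1 h2
    have hq' : q < k := by
      have := h1; simp only [List.length_take] at this; omega
    rw [List.getElem_take, List.getElem_drop]
    rw [← hsp q (by omega), ← hocc2 ((A j).length - k + q) (by omega)]
    congr 1
    omega
  -- match case
  have hmatch : ∀ (j : Fin m) (k : ℕ), 1 ≤ k → k ≤ li → k ≤ (A j).length →
      (A i).take k = (A j).drop ((A j).length - k) →
      μ (T j k ∩ Sp) = μ (T j k) * ENNReal.ofReal (strP p ((A i).drop k)) := by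
    intro j k hk1 hk2 hkj hmat
    have hsubspell : T j k ⊆ SpellAt n ((A i).take k) := by
      intro ξ hT'
      obtain ⟨hocc1, hocc2⟩ := occursAt_iff.1 (hTocc j k ξ hT')
      intro q hq
      have hq' : q < k := by
        have := hq; simp only [List.length_take] at this; omega
      have e2 := hocc2 ((A j).length - k + q) (by omega)
      calc ξ (n + q) = ξ (n + k - (A j).length + ((A j).length - k + q)) := by
            congr 1; omega
        _ = (A j)[(A j).length - k + q] := e2
        _ = ((A j).drop ((A j).length - k))[q]'(by simp; omega) :=
            (List.getElem_drop).symm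
        _ = ((A i).take k)[q] := (List.getElem_of_eq hmat.symm _)
    have hTS : T j k ∩ Sp = T j k ∩ SpellAt (n + k) ((A i).drop k) := by
      rw [hSp, spellAt_split (show k ≤ (A i).length by omega), ← Set.inter_assoc,
        Set.inter_eq_left.2 hsubspell]
    rw [hTS]
    exact split_lemma hμ hp0 hp1 (hdetT j k) _
  -- convert to reals and assemble
  have hreal : (μ G).toReal * strP p (A i) =
      ∑ jk ∈ (Finset.univ ×ˢ Finset.Icc 1 li : Finset (Fin m × ℕ)),
        (μ (T jk.1 jk.2 ∩ Sp)).toReal := by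
    rw [← ENNReal.toReal_ofReal (strP_nonneg hp0 hp1 (A i)), ← ENNReal.toReal_mul, ← hA, hD,
      ENNReal.toReal_sum (fun jk _ => measure_ne_top μ _)]
  rw [hreal, Finset.sum_product]
  apply Finset.sum_congr rfl
  intro j _
  have hsum : ∑ k ∈ Finset.Icc 1 li, (μ (T j k ∩ Sp)).toReal
      = ∑ k ∈ Finset.Icc 1 (min li (A j).length), (μ (T j k ∩ Sp)).toReal := by
    refine (Finset.sum_subset (Finset.Icc_subset_Icc_right (min_le_left _ _))
      (fun k hk hk2 => ?_)).symm
    rw [Finset.mem_Icc] at hk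
    rw [Finset.mem_Icc] at hk2
    rw [hempty1 j k hk.1 hk.2 (by omega)]
    simp
  rw [hsum]
  apply Finset.sum_congr rfl
  intro k hk
  rw [Finset.mem_Icc] at hk
  have hk1 := hk.1
  have hkli : k ≤ li := le_trans hk.2 (min_le_left _ _)
  have hkj : k ≤ (A j).length := le_trans hk.2 (min_le_right _ _)
  by_cases hmat : (A i).take k = (A j).drop ((A j).length - k)
  · rw [hmatch j k hk1 hkli hkj hmat, if_pos hmat, ENNReal.toReal_mul,
      ENNReal.toReal_ofReal (strP_nonneg hp0 hp1 _)]
    ring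
  · rw [hempty2 j k hk1 hkli hkj hmat, if_neg hmat]
    simp
end W


set_option maxHeartbeats 2000000 in
/-- In the `m`-player game, for every `1 ≤ i ≤ m` and every
`s ∈ [−1,1]`, `Q_τ(s) ⬝ P(A_i) ⬝ s^{l_i} = Σ_{j=1}^{m} g_τ^{A_j}(s) ⬝ w_{A_i}^{A_j}(s)`,
where `Q_τ(s) = Σ_{n≥0} μ(τ > n) s^n` and `g_τ^{A_j}(s) = Σ_{n≥0} p_n^{A_j} s^n`
with `p_n^{A_j} = μ(τ = τ_{A_j} = n)`. -/
theorem multi_Q_identity (p : ℝ) (hp0 : 0 < p) (hp1 : p < 1)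
    (μ : Measure (ℕ → Bool)) [IsProbabilityMeasure μ] (hμ : IsCoinMeasure p μ)
    (m : ℕ) (hm : 1 ≤ m) (A : Fin m → List Bool) (hlen : ∀ i, 1 ≤ (A i).length)
    (hsub : ∀ i j, i ≠ j → ¬ (A i) <:+: (A j))
    (i : Fin m) (s : ℝ) (hs : s ∈ Set.Icc (-1 : ℝ) 1) :
    (∑' n : ℕ, (μ {ξ | (n : ℕ∞) < gameTime A ξ}).toReal * s ^ n) *
        strP p (A i) * s ^ (A i).length =
      ∑ j, (∑' n : ℕ, (μ {ξ | gameTime A ξ = (n : ℕ∞) ∧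
              hitTime (A j) ξ = (n : ℕ∞)}).toReal * s ^ n) *
        corrW p (A i) (A j) s := by
  classical
  obtain ⟨hs1, hs2⟩ := hs
  have hsabs : |s| ≤ 1 := abs_le.mpr ⟨hs1, hs2⟩
  have hPsum : ∀ j : Fin m, Summable (fun n : ℕ =>
      (μ {ξ | gameTime A ξ = (n : ℕ∞) ∧ hitTime (A j) ξ = (n : ℕ∞)}).toReal) := by
    intro j
    refine MeasureTheory.summable_measure_toReal (fun n => detBy_measurable detBy_event)
      (fun n n' hnn => ?_)
    rw [Function.onFun, Set.disjoint_left]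
    rintro ξ ⟨h1, -⟩ ⟨h2, -⟩
    exact hnn (by exact_mod_cast h1.symm.trans h2)
  have hPvan : ∀ (j : Fin m) (t : ℕ), t < (A j).length →
      μ {ξ | gameTime A ξ = (t : ℕ∞) ∧ hitTime (A j) ξ = (t : ℕ∞)} = 0 := by
    intro j t ht
    have he : {ξ : ℕ → Bool | gameTime A ξ = (t : ℕ∞) ∧ hitTime (A j) ξ = (t : ℕ∞)} = ∅ := by
      rw [Set.eq_empty_iff_forall_notMem]
      rintro ξ ⟨-, h2⟩
      have := (hitTime_eq_iff.1 h2).1.1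
      omega
    rw [he, measure_empty]
  have hsummand : ∀ (j : Fin m) (k : ℕ), Summable (fun n : ℕ =>
      (if (A i).take k = (A j).drop ((A j).length - k) then (1:ℝ) else 0) *
        strP p ((A i).drop k) *
        (μ {ξ | gameTime A ξ = ((n + k : ℕ) : ℕ∞) ∧
            hitTime (A j) ξ = ((n + k : ℕ) : ℕ∞)}).toReal *
        s ^ (n + (A i).length)) := by
    intro j k
    refine Summable.of_norm_bounded (g :=
      fun n => |(if (A i).take k = (A j).drop ((A j).length - k) then (1:ℝ) else 0) *
        strP p ((A i).drop k)| *
        (μ {ξ | gameTime A ξ = ((n + k : ℕ) : ℕ∞) ∧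
            hitTime (A j) ξ = ((n + k : ℕ) : ℕ∞)}).toReal)
      (Summable.mul_left _ ((summable_nat_add_iff k).2 (hPsum j))) (fun n => ?_)
    rw [Real.norm_eq_abs, abs_mul, abs_mul, abs_of_nonneg (ENNReal.toReal_nonneg), abs_pow]
    exact mul_le_of_le_one_right (by positivity) (pow_le_one₀ (abs_nonneg s) hsabs)
  rw [← tsum_mul_right, ← tsum_mul_right]
  have h1 : ∀ n : ℕ, (μ {ξ | (n : ℕ∞) < gameTime A ξ}).toReal * s ^ n * strP p (A i) *
        s ^ (A i).length =
      ∑ j, ∑ k ∈ Finset.Icc 1 (min (A i).length (A j).length),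
        (if (A i).take k = (A j).drop ((A j).length - k) then (1:ℝ) else 0) *
          strP p ((A i).drop k) *
          (μ {ξ | gameTime A ξ = ((n + k : ℕ) : ℕ∞) ∧
              hitTime (A j) ξ = ((n + k : ℕ) : ℕ∞)}).toReal *
          s ^ (n + (A i).length) := by
    intro n
    have hpn := per_n hp0 hp1 hμ hm A hlen hsub i n
    calc (μ {ξ | (n : ℕ∞) < gameTime A ξ}).toReal * s ^ n * strP p (A i) * s ^ (A i).length
        = (μ {ξ | (n : ℕ∞) < gameTime A ξ}).toReal * strP p (A i) *
            s ^ (n + (A i).length) := by rw [pow_add]; ring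
      _ = _ := by
          rw [hpn, Finset.sum_mul]
          exact Finset.sum_congr rfl fun j _ => by rw [Finset.sum_mul]
  rw [tsum_congr h1, Summable.tsum_finsetSum (fun j _ => summable_sum (fun k _ => hsummand j k))]
  apply Finset.sum_congr rfl
  intro j _
  rw [Summable.tsum_finsetSum (fun k _ => hsummand j k)]
  simp only [corrW]
  rw [Finset.mul_sum]
  apply Finset.sum_congr rfl
  intro k hk
  rw [Finset.mem_Icc] at hk
  have hkli : k ≤ (A i).length := le_trans hk.2 (min_le_left _ _)
  have hkj : k ≤ (A j).length := le_trans hk.2 (min_le_right _ _)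
  rw [← tsum_mul_right]
  have hf : Function.support (fun t : ℕ =>
      (μ {ξ | gameTime A ξ = (t : ℕ∞) ∧ hitTime (A j) ξ = (t : ℕ∞)}).toReal * s ^ t *
      ((if (A i).take k = (A j).drop ((A j).length - k) then (1:ℝ) else 0) *
        strP p ((A i).drop k) * s ^ ((A i).length - k))) ⊆
      Set.range (fun n : ℕ => n + k) := by
    intro t ht
    rcases le_or_gt k t with h' | h'
    · exact ⟨t - k, by show t - k + k = t; omega⟩
    · exfalso
      apply Function.mem_support.mp ht
      show (μ {ξ | gameTime A ξ = (t : ℕ∞) ∧ hitTime (A j) ξ = (t : ℕ∞)}).toReal * s ^ t *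
        ((if (A i).take k = (A j).drop ((A j).length - k) then (1:ℝ) else 0) *
          strP p ((A i).drop k) * s ^ ((A i).length - k)) = 0
      rw [hPvan j t (by omega)]
      simp
  rw [← Function.Injective.tsum_eq (add_left_injective k) hf]
  apply tsum_congr
  intro n
  show (if (A i).take k = (A j).drop ((A j).length - k) then (1:ℝ) else 0) *
      strP p ((A i).drop k) *
      (μ {ξ | gameTime A ξ = ((n + k : ℕ) : ℕ∞) ∧
          hitTime (A j) ξ = ((n + k : ℕ) : ℕ∞)}).toReal *
      s ^ (n + (A i).length) =
    (μ {ξ | gameTime A ξ = ((n + k : ℕ) : ℕ∞) ∧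
        hitTime (A j) ξ = ((n + k : ℕ) : ℕ∞)}).toReal * s ^ (n + k) *
      ((if (A i).take k = (A j).drop ((A j).length - k) then (1:ℝ) else 0) *
        strP p ((A i).drop k) * s ^ ((A i).length - k))
  rw [show s ^ (n + (A i).length) = s ^ (n + k) * s ^ ((A i).length - k) by
    rw [← pow_add]; congr 1; omega]
  ring
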